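/- For m even and 1 ≤ k ≤ m/2, the rational function F_k(y) = (y_1 + ⋯ + y_{2k}) · (y_{2k+2} y_{2k+4} ⋯ y_m)/(y_{2k+1} y_{2k+3} ⋯ y_{m-1}) is a constant of motion of the Lotka-Volterra system on ℝ^m. -/

import Mathlib

/-- Swap order of summation over pairs `1 ≤ l < j ≤ n`. -/
lemma lv_swap_sum (n : ℕ) (g : ℕ → ℕ → ℝ) :
    ∑ l ∈ Finset.Icc 1 n, ∑ j ∈ Finset.Ioc l n, g l j
      = ∑ j ∈ Finset.Icc 1 n, ∑ l ∈ Finset.Ico 1 j, g l j := by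
  induction n with
  | zero => simp
  | succ n ih =>
    rcases Nat.eq_zero_or_pos n with rfl | hn
    · simp
    rw [Finset.sum_Icc_succ_top (by omega), Finset.sum_Icc_succ_top (by omega)]
    have h1 : ∀ l ∈ Finset.Icc 1 n, ∑ j ∈ Finset.Ioc l (n + 1), g l j
        = ∑ j ∈ Finset.Ioc l n, g l j + g l (n + 1) := by
      intro l hl
      simp only [Finset.mem_Icc] at hl
      rw [Finset.sum_Ioc_succ_top (by omega)]
    rw [Finset.sum_congr rfl h1, Finset.sum_add_distrib, ih]
    have h2 : Finset.Ioc (n + 1) (n + 1) = ∅ := by simp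
    have h3 : Finset.Ico 1 (n + 1) = Finset.Icc 1 n := by
      rw [Finset.Ico_add_one_right_eq_Icc]
    rw [h2, h3]
    simp [add_comm]

/-- Pairing up a sum over an interval of even length. -/
lemma lv_pair_sum (f : ℕ → ℝ) (a : ℕ) : ∀ b : ℕ,
    ∑ s ∈ Finset.Icc (a + 1) b, (f (2 * s - 1) + f (2 * s))
      = ∑ j ∈ Finset.Ioc (2 * a) (2 * b), f j := by
  intro b
  induction b with
  | zero => simp
  | succ b ih =>
    rcases le_or_gt (a + 1) (b + 1) with h | h
    · rw [Finset.sum_Icc_succ_top h, ih]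
      have h1 : 2 * (b + 1) = (2 * b + 1) + 1 := by ring
      rw [h1, Finset.sum_Ioc_succ_top (by omega), Finset.sum_Ioc_succ_top (by omega)]
      have h3 : 2 * b + 1 + 1 - 1 = 2 * b + 1 := by omega
      rw [h3]
      ring
    · have h1 : Finset.Icc (a + 1) (b + 1) = ∅ := by
        rw [Finset.Icc_eq_empty_iff]; omega
      have h2 : Finset.Ioc (2 * a) (2 * (b + 1)) = ∅ := by
        rw [Finset.Ioc_eq_empty_iff]; omega
      rw [h1, h2]; simp

/-- for `m` even and `1 ≤ k ≤ m/2`, the function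
`F_k = (y_1 + ⋯ + y_{2k}) ∏_{s=k+1}^{m/2} y_{2s}/y_{2s-1}`
(i.e. `(y_1+⋯+y_{2k}) (y_{2k+2} ⋯ y_m)/(y_{2k+1} ⋯ y_{m-1})`)
is a constant of motion of the Lotka-Volterra system. -/
theorem lv_Fk_conserved_even (m : ℕ) (hm : Even m) (k : ℕ) (hk1 : 1 ≤ k) (hk2 : k ≤ m / 2)
    (y : ℝ → ℕ → ℝ)
    (hy : ∀ i ∈ Finset.Icc 1 m, ∀ t : ℝ, HasDerivAt (fun s => y s i)
      (y t i * (-(∑ j ∈ Finset.Ico 1 i, y t j) + ∑ j ∈ Finset.Ioc i m, y t j)) t)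
    (hnz : ∀ t : ℝ, ∀ s ∈ Finset.Icc (k + 1) (m / 2), y t (2 * s - 1) ≠ 0) (t : ℝ) :
    HasDerivAt (fun τ => (∑ l ∈ Finset.Icc 1 (2 * k), y τ l) *
      ∏ s ∈ Finset.Icc (k + 1) (m / 2), y τ (2 * s) / y τ (2 * s - 1)) 0 t := by
  obtain ⟨r, hr⟩ := hm
  set n := m / 2 with hn
  have hmn : m = 2 * n := by omega
  have hkm : 2 * k ≤ m := by omega
  -- the coefficient in the ODE
  set c : ℕ → ℝ := fun i =>
    -(∑ j ∈ Finset.Ico 1 i, y t j) + ∑ j ∈ Finset.Ioc i m, y t j with hc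
  -- the "remainder" sum
  set R : ℝ := ∑ j ∈ Finset.Ioc (2 * k) m, y t j with hR
  -- derivative of the first factor
  have hS : HasDerivAt (fun τ => ∑ l ∈ Finset.Icc 1 (2 * k), y τ l)
      ((∑ l ∈ Finset.Icc 1 (2 * k), y t l) * R) t := by
    have h1 : HasDerivAt (fun τ => ∑ l ∈ Finset.Icc 1 (2 * k), y τ l)
        (∑ l ∈ Finset.Icc 1 (2 * k), y t l * c l) t := by
      apply HasDerivAt.fun_sum
      intro l hl
      simp only [Finset.mem_Icc] at hl
      exact hy l (Finset.mem_Icc.2 ⟨hl.1, le_trans hl.2 hkm⟩) t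
    convert h1 using 1
    have hsplit : ∀ l ∈ Finset.Icc 1 (2 * k),
        y t l * c l = y t l * (-(∑ j ∈ Finset.Ico 1 l, y t j)
          + ∑ j ∈ Finset.Ioc l (2 * k), y t j) + y t l * R := by
      intro l hl
      simp only [Finset.mem_Icc] at hl
      have := Finset.sum_Ioc_consecutive (y t) hl.2 hkm
      rw [hc]
      simp only [← this, hR]
      ring
    rw [Finset.sum_congr rfl hsplit, Finset.sum_add_distrib, ← Finset.sum_mul]
    have hz : ∑ l ∈ Finset.Icc 1 (2 * k), y t l * (-(∑ j ∈ Finset.Ico 1 l, y t j)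
        + ∑ j ∈ Finset.Ioc l (2 * k), y t j) = 0 := by
      have hswap := lv_swap_sum (2 * k) (fun l j => y t l * y t j)
      have e1 : ∑ l ∈ Finset.Icc 1 (2 * k), y t l * ∑ j ∈ Finset.Ioc l (2 * k), y t j
          = ∑ l ∈ Finset.Icc 1 (2 * k), ∑ j ∈ Finset.Ioc l (2 * k), y t l * y t j := by
        simp [Finset.mul_sum]
      have e2 : ∑ j ∈ Finset.Icc 1 (2 * k), ∑ l ∈ Finset.Ico 1 j, y t l * y t j
          = ∑ j ∈ Finset.Icc 1 (2 * k), y t j * ∑ l ∈ Finset.Ico 1 j, y t l := by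
        apply Finset.sum_congr rfl
        intro j _
        rw [Finset.mul_sum]
        exact Finset.sum_congr rfl fun l _ => mul_comm _ _
      have key : ∑ l ∈ Finset.Icc 1 (2 * k), y t l * ∑ j ∈ Finset.Ioc l (2 * k), y t j
          = ∑ j ∈ Finset.Icc 1 (2 * k), y t j * ∑ l ∈ Finset.Ico 1 j, y t l := by
        rw [e1, hswap, e2]
      calc ∑ l ∈ Finset.Icc 1 (2 * k), y t l * (-(∑ j ∈ Finset.Ico 1 l, y t j)
              + ∑ j ∈ Finset.Ioc l (2 * k), y t j)
          = ∑ l ∈ Finset.Icc 1 (2 * k), (y t l * ∑ j ∈ Finset.Ioc l (2 * k), y t j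
              - y t l * ∑ j ∈ Finset.Ico 1 l, y t j) := by
            apply Finset.sum_congr rfl; intro l _; ring
        _ = 0 := by
            rw [Finset.sum_sub_distrib, key]; ring_nf
    rw [hz]; ring
  -- key identity for the coefficients of paired indices
  have hcd : ∀ s ∈ Finset.Icc (k + 1) n,
      c (2 * s) - c (2 * s - 1) = -(y t (2 * s - 1) + y t (2 * s)) := by
    intro s hs
    simp only [Finset.mem_Icc] at hs
    have h2s : 2 * s ≤ m := by omega
    have h1 : ∑ j ∈ Finset.Ico 1 (2 * s), y t j
        = ∑ j ∈ Finset.Ico 1 (2 * s - 1), y t j + y t (2 * s - 1) := by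
      have h0 : 2 * s = (2 * s - 1) + 1 := by omega
      rw [h0, Finset.sum_Ico_succ_top (by omega)]
      simp
    have h2 : ∑ j ∈ Finset.Ioc (2 * s - 1) m, y t j
        = y t (2 * s) + ∑ j ∈ Finset.Ioc (2 * s) m, y t j := by
      have e : Finset.Ioc (2 * s - 1) m = Finset.Icc (2 * s) m := by
        rw [← Finset.Icc_add_one_left_eq_Ioc]
        congr 1
        omega
      rw [e, Finset.Icc_eq_cons_Ioc h2s, Finset.sum_cons]
    rw [hc]
    simp only [h1, h2]
    ring
  -- derivative of the product factor
  have hP : HasDerivAt (fun τ => ∏ s ∈ Finset.Icc (k + 1) n, y τ (2 * s) / y τ (2 * s - 1))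
      ((∏ s ∈ Finset.Icc (k + 1) n, y t (2 * s) / y t (2 * s - 1)) * (-R)) t := by
    have hq : ∀ s ∈ Finset.Icc (k + 1) n,
        HasDerivAt (fun τ => y τ (2 * s) / y τ (2 * s - 1))
          ((y t (2 * s) / y t (2 * s - 1)) * (c (2 * s) - c (2 * s - 1))) t := by
      intro s hs
      simp only [Finset.mem_Icc] at hs
      have hmem1 : 2 * s ∈ Finset.Icc 1 m := Finset.mem_Icc.2 ⟨by omega, by omega⟩
      have hmem2 : 2 * s - 1 ∈ Finset.Icc 1 m := Finset.mem_Icc.2 ⟨by omega, by omega⟩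
      have hz := hnz t s (Finset.mem_Icc.2 ⟨hs.1, hs.2⟩)
      have hd := (hy (2 * s) hmem1 t).div (hy (2 * s - 1) hmem2 t) hz
      refine hd.congr_deriv ?_
      rw [hc]
      field_simp
    have hprod := HasDerivAt.fun_finsetProd hq
    refine hprod.congr_deriv ?_
    have e : ∀ s ∈ Finset.Icc (k + 1) n,
        (∏ j ∈ (Finset.Icc (k + 1) n).erase s, y t (2 * j) / y t (2 * j - 1)) •
          ((y t (2 * s) / y t (2 * s - 1)) * (c (2 * s) - c (2 * s - 1)))
        = (∏ j ∈ Finset.Icc (k + 1) n, y t (2 * j) / y t (2 * j - 1))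
            * (c (2 * s) - c (2 * s - 1)) := by
      intro s hs
      rw [smul_eq_mul, ← Finset.mul_prod_erase _ _ hs]
      ring
    rw [Finset.sum_congr rfl e, ← Finset.mul_sum]
    congr 1
    have hsum : ∑ s ∈ Finset.Icc (k + 1) n, (c (2 * s) - c (2 * s - 1))
        = -R := by
      rw [Finset.sum_congr rfl hcd, Finset.sum_neg_distrib,
        lv_pair_sum (y t) k n, hR, hmn]
    rw [hsum]
  have hfinal := hS.mul hP
  refine hfinal.congr_deriv ?_
  ring
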